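/- Let Γ be a finite vertex-transitive graph (possibly disconnected) on vertex set V, let 2 ≤ n ≤ |V| − 1, and let G be a group acting on Γ by graph automorphisms whose action on V is transitive. Assume h_{n+1}(Γ) > 2(n+1)·h_n(Γ), and let V = A_1 ⊔ ⋯ ⊔ A_n be a partition into n non-empty sets achieving h_n(Γ). Then there exist an integer l with 1 ≤ l ≤ n, a permutation τ of {1,…,n}, and a group homomorphism Φ_n : G → S_l (the symmetric group on {1,…,l}) such that for every g ∈ G and every i ∈ {1,…,l}, |g·A_{τ(i)} △ A_{τ(Φ_n(g)(i))}| ≤ (4·h_n(Γ)/h_{n+1}(Γ))·max_{1≤k≤n} |A_k|. -/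

import Mathlib

open scoped Pointwise

namespace Multiway

variable {V : Type*}

/-- The edge boundary `∂A`: the set of edges with one endpoint in `A` and the other in `Vᶜ∖A`. -/
def edgeBdry (G : SimpleGraph V) (A : Set V) : Set (Sym2 V) :=
  {e | e ∈ G.edgeSet ∧ ∃ u v, e = s(u, v) ∧ u ∈ A ∧ v ∉ A}

/-- The symmetric vertex boundary `δA`: vertices incident to an edge crossing `A`. -/
def vertBdry (G : SimpleGraph V) (A : Set V) : Set V :=
  {x | ∃ y, G.Adj x y ∧ ¬ (x ∈ A ↔ y ∈ A)}

/-- A partition of the vertex set into `n` non-empty pairwise disjoint sets. -/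
def IsNPartition (n : ℕ) (A : Fin n → Set V) : Prop :=
  (∀ i, (A i).Nonempty) ∧ (∀ i j, i ≠ j → Disjoint (A i) (A j)) ∧ (⋃ i, A i) = Set.univ

/-- `max_i |∂A_i| / |A_i|`. -/
noncomputable def edgeRatioMax (G : SimpleGraph V) {n : ℕ} (A : Fin n → Set V) : ℝ :=
  ⨆ i, ((edgeBdry G (A i)).ncard : ℝ) / ((A i).ncard : ℝ)

/-- `max_i |δA_i| / |A_i|`. -/
noncomputable def vertRatioMax (G : SimpleGraph V) {n : ℕ} (A : Fin n → Set V) : ℝ :=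
  ⨆ i, ((vertBdry G (A i)).ncard : ℝ) / ((A i).ncard : ℝ)

/-- The `n`-way isoperimetric constant `h_n(Γ)`. -/
noncomputable def multiH (G : SimpleGraph V) (n : ℕ) : ℝ :=
  sInf {r | ∃ A : Fin n → Set V, IsNPartition n A ∧ r = edgeRatioMax G A}

/-- The `n`-way symmetric vertex isoperimetric constant `ι_n(Γ)`. -/
noncomputable def multiIota (G : SimpleGraph V) (n : ℕ) : ℝ :=
  sInf {r | ∃ A : Fin n → Set V, IsNPartition n A ∧ r = vertRatioMax G A}

/-- A graph is vertex-transitive if its automorphism group acts transitively on vertices. -/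
def VertexTransitive (G : SimpleGraph V) : Prop :=
  ∀ u v : V, ∃ φ : G ≃g G, φ u = v


lemma edgeBdry_inter_subset (Γ : SimpleGraph V) (X Y : Set V) :
    edgeBdry Γ (X ∩ Y) ⊆ edgeBdry Γ X ∪ edgeBdry Γ Y := by
  rintro e ⟨he, u, v, rfl, hu, hv⟩
  by_cases hvX : v ∈ X
  · right; exact ⟨he, u, v, rfl, hu.2, fun hvY => hv ⟨hvX, hvY⟩⟩
  · left; exact ⟨he, u, v, rfl, hu.1, hvX⟩

lemma edgeBdry_diff_subset (Γ : SimpleGraph V) (X Y : Set V) :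
    edgeBdry Γ (Y \ X) ⊆ edgeBdry Γ Y ∪ edgeBdry Γ X := by
  rintro e ⟨he, u, v, rfl, hu, hv⟩
  by_cases hvY : v ∈ Y
  · right
    have hvX : v ∈ X := by by_contra hvX; exact hv ⟨hvY, hvX⟩
    exact ⟨he, v, u, Sym2.eq_swap, hvX, hu.2⟩
  · left; exact ⟨he, u, v, rfl, hu.1, hvY⟩

lemma edgeBdry_compl (Γ : SimpleGraph V) (S : Set V) : edgeBdry Γ Sᶜ = edgeBdry Γ S := by
  have key : ∀ T : Set V, edgeBdry Γ Tᶜ ⊆ edgeBdry Γ T := by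
    rintro T e ⟨he, u, v, rfl, hu, hv⟩
    exact ⟨he, v, u, Sym2.eq_swap, Set.notMem_compl_iff.mp hv, hu⟩
  exact (key S).antisymm (by simpa using key Sᶜ)

lemma edgeBdry_smul {G : Type*} [Group G] [MulAction G V] (Γ : SimpleGraph V)
    (hact : ∀ (g : G) (u v : V), Γ.Adj (g • u) (g • v) ↔ Γ.Adj u v)
    (g : G) (S : Set V) :
    edgeBdry Γ (g • S) = Sym2.map (fun v => g • v) '' edgeBdry Γ S := by
  ext e
  constructor
  · rintro ⟨he, u, v, rfl, hu, hv⟩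
    refine ⟨s(g⁻¹ • u, g⁻¹ • v), ⟨?_, g⁻¹ • u, g⁻¹ • v, rfl, ?_, ?_⟩, ?_⟩
    · rw [SimpleGraph.mem_edgeSet] at he ⊢
      exact (hact g⁻¹ u v).mpr he
    · exact Set.mem_smul_set_iff_inv_smul_mem.mp hu
    · intro hmem; exact hv (Set.mem_smul_set_iff_inv_smul_mem.mpr hmem)
    · rw [Sym2.map_pair_eq]; simp
  · rintro ⟨e', ⟨he, u, v, rfl, hu, hv⟩, rfl⟩
    rw [Sym2.map_pair_eq]
    refine ⟨?_, g • u, g • v, rfl, ?_, ?_⟩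
    · rw [SimpleGraph.mem_edgeSet] at he ⊢
      exact (hact g u v).mpr he
    · exact Set.smul_mem_smul_set hu
    · intro hmem; exact hv (Set.smul_mem_smul_set_iff.mp hmem)

lemma ncard_edgeBdry_smul {G : Type*} [Group G] [MulAction G V] (Γ : SimpleGraph V)
    (hact : ∀ (g : G) (u v : V), Γ.Adj (g • u) (g • v) ↔ Γ.Adj u v)
    (g : G) (S : Set V) :
    (edgeBdry Γ (g • S)).ncard = (edgeBdry Γ S).ncard := by
  rw [edgeBdry_smul Γ hact g S]
  exact Set.ncard_image_of_injective _ (Sym2.map.injective (MulAction.injective g))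

lemma ncard_iUnion_fin_le {α : Type*} [Finite α] : ∀ {m : ℕ} (f : Fin m → Set α),
    (⋃ i, f i).ncard ≤ ∑ i, (f i).ncard := by
  intro m
  induction m with
  | zero => simp
  | succ m ih =>
    intro f
    have hu : (⋃ i, f i) = f 0 ∪ ⋃ i : Fin m, f i.succ := by
      ext x; simp [Fin.exists_fin_succ]
    rw [hu, Fin.sum_univ_succ]
    exact le_trans (Set.ncard_union_le _ _) (by exact add_le_add (le_refl _) (ih _))

set_option maxHeartbeats 2000000 in
theorem homomorphism_from_h_gap {V : Type*} [Fintype V] (Γ : SimpleGraph V)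
    (n : ℕ) (hn : 2 ≤ n) (hcard : n + 1 ≤ Fintype.card V)
    (G : Type*) [Group G] [MulAction G V]
    (hact : ∀ (g : G) (u v : V), Γ.Adj (g • u) (g • v) ↔ Γ.Adj u v)
    (htrans : ∀ u v : V, ∃ g : G, g • u = v)
    (hgap : multiH Γ (n + 1) > 2 * (n + 1) * multiH Γ n)
    (A : Fin n → Set V) (hA : IsNPartition n A)
    (hach : edgeRatioMax Γ A = multiH Γ n) :
    ∃ (l : ℕ) (_ : 1 ≤ l) (hln : l ≤ n) (τ : Equiv.Perm (Fin n))
      (Φ : G →* Equiv.Perm (Fin l)),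
      ∀ (g : G) (i : Fin l),
        ((symmDiff (g • A (τ (Fin.castLE hln i))) (A (τ (Fin.castLE hln (Φ g i))))).ncard : ℝ)
          ≤ 4 * multiH Γ n / multiH Γ (n + 1) * (⨆ k, ((A k).ncard : ℝ)) := by
  classical
  obtain ⟨hne, hdisj, hcover⟩ := hA
  haveI : Nonempty (Fin n) := ⟨⟨0, by omega⟩⟩
  set h : ℝ := multiH Γ n with hh
  set H : ℝ := multiH Γ (n + 1) with hH
  have hn2 : (2 : ℝ) ≤ (n : ℝ) := by exact_mod_cast hn
  have hAco : ∀ i, 0 < ((A i).ncard : ℝ) := by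
    intro i
    have : 0 < (A i).ncard := (Set.ncard_pos (Set.toFinite _)).mpr (hne i)
    exact_mod_cast this
  have hratio_le : ∀ i, ((edgeBdry Γ (A i)).ncard : ℝ) / ((A i).ncard : ℝ) ≤ h := by
    intro i
    rw [← hach]
    exact le_ciSup (f := fun i : Fin n => ((edgeBdry Γ (A i)).ncard : ℝ) / ((A i).ncard : ℝ)) (Finite.bddAbove_range _) i
  have hbdry_le : ∀ i, ((edgeBdry Γ (A i)).ncard : ℝ) ≤ h * ((A i).ncard : ℝ) := by
    intro i
    have := hratio_le i
    rwa [div_le_iff₀ (hAco i)] at this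
  have h0 : 0 ≤ h := by
    rw [← hach]
    exact Real.iSup_nonneg fun i => div_nonneg (by positivity) (by positivity)
  have hHpos : 0 < H := lt_of_le_of_lt (by positivity) hgap
  have hhH : h < H := by nlinarith [hgap, h0, hn2]
  -- the max block
  obtain ⟨i0, hi0⟩ := Finite.exists_max (fun k : Fin n => ((A k).ncard : ℝ))
  set M : ℝ := ((A i0).ncard : ℝ) with hM
  have hMpos : 0 < M := hAco i0
  have hiSupM : (⨆ k, ((A k).ncard : ℝ)) = M :=
    le_antisymm (ciSup_le hi0) (le_ciSup (f := fun k : Fin n => ((A k).ncard : ℝ)) (Finite.bddAbove_range _) i0)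
  -- max boundary size
  set D : ℕ := Finset.univ.sup (fun i : Fin n => (edgeBdry Γ (A i)).ncard) with hD
  have hDle : ∀ i, (edgeBdry Γ (A i)).ncard ≤ D := fun i => Finset.le_sup (f := fun i : Fin n => (edgeBdry Γ (A i)).ncard) (Finset.mem_univ i)
  have hDhM : (D : ℝ) ≤ h * M := by
    obtain ⟨i1, _, hi1⟩ := Finset.exists_mem_eq_sup Finset.univ Finset.univ_nonempty
      (fun i : Fin n => (edgeBdry Γ (A i)).ncard)
    rw [hD, hi1]
    calc ((edgeBdry Γ (A i1)).ncard : ℝ) ≤ h * ((A i1).ncard : ℝ) := hbdry_le i1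
      _ ≤ h * M := by have := hi0 i1; nlinarith [h0]
  set r : ℝ := 2 * D / H with hr
  have hr0 : 0 ≤ r := by positivity
  have hrH : r * H = 2 * D := by
    rw [hr]; field_simp
  -- The key dichotomy
  have KL1 : ∀ (g : G) (i j : Fin n),
      ((g • A i ∩ A j).ncard : ℝ) ≤ r ∨ ((A j \ g • A i).ncard : ℝ) ≤ r := by
    intro g i j
    by_contra hcon
    push_neg at hcon
    obtain ⟨hS, hT⟩ := hcon
    set S : Set V := g • A i ∩ A j with hSdef
    set B : Fin n → Set V := Function.update A j (A j \ g • A i) with hBdef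
    set A' : Fin (n + 1) → Set V := Fin.snoc B S with hA'def
    have hSne : S.Nonempty := by
      rw [← Set.ncard_pos (Set.toFinite _)]
      have : (0 : ℝ) < (S.ncard : ℝ) := lt_of_le_of_lt hr0 hS
      exact_mod_cast this
    have hTne : (A j \ g • A i).Nonempty := by
      rw [← Set.ncard_pos (Set.toFinite _)]
      have : (0 : ℝ) < ((A j \ g • A i).ncard : ℝ) := lt_of_le_of_lt hr0 hT
      exact_mod_cast this
    have hBsub : ∀ k, B k ⊆ A k := by
      intro k
      by_cases hk : k = j
      · subst hk; rw [hBdef, Function.update_self]; exact Set.diff_subset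
      · rw [hBdef, Function.update_of_ne hk]
    have hSsubj : S ⊆ A j := Set.inter_subset_right
    have hSsubg : S ⊆ g • A i := Set.inter_subset_left
    have hBjS : Disjoint (B j) S := by
      rw [hBdef, Function.update_self]
      exact Set.disjoint_left.mpr fun x hx hxS => hx.2 (hSsubg hxS)
    have hlastCast : ∀ (k : Fin n), Disjoint (A' (Fin.castSucc k)) (A' (Fin.last n)) := by
      intro k
      rw [hA'def]
      rw [Fin.snoc_last, Fin.snoc_castSucc]
      by_cases hk : k = j
      · subst hk; exact hBjS
      · rw [hBdef, Function.update_of_ne hk]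
        exact (hdisj k j hk).mono_right hSsubj
    have hpart : IsNPartition (n + 1) A' := by
      refine ⟨?_, ?_, ?_⟩
      · intro x
        rcases Fin.eq_castSucc_or_eq_last x with ⟨k, rfl⟩ | rfl
        · rw [hA'def, Fin.snoc_castSucc]
          by_cases hk : k = j
          · subst hk; rw [hBdef, Function.update_self]; exact hTne
          · rw [hBdef, Function.update_of_ne hk]; exact hne k
        · rw [hA'def, Fin.snoc_last]; exact hSne
      · intro x y hxy
        rcases Fin.eq_castSucc_or_eq_last x with ⟨k, rfl⟩ | rfl
        · rcases Fin.eq_castSucc_or_eq_last y with ⟨k', rfl⟩ | rfl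
          · have hkk' : k ≠ k' := fun e => hxy (by rw [e])
            rw [hA'def, Fin.snoc_castSucc, Fin.snoc_castSucc]
            exact (hdisj k k' hkk').mono (hBsub k) (hBsub k')
          · exact hlastCast k
        · rcases Fin.eq_castSucc_or_eq_last y with ⟨k', rfl⟩ | rfl
          · exact (hlastCast k').symm
          · exact absurd rfl hxy
      · apply Set.eq_univ_of_univ_subset
        intro v _
        have hv : v ∈ ⋃ i, A i := by rw [hcover]; trivial
        rw [Set.mem_iUnion] at hv
        obtain ⟨k, hk⟩ := hv
        rw [Set.mem_iUnion]
        by_cases hkj : k = j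
        · subst hkj
          by_cases hvg : v ∈ g • A i
          · exact ⟨Fin.last n, by rw [hA'def, Fin.snoc_last]; exact ⟨hvg, hk⟩⟩
          · exact ⟨Fin.castSucc k, by
              rw [hA'def, Fin.snoc_castSucc, hBdef, Function.update_self]; exact ⟨hk, hvg⟩⟩
        · exact ⟨Fin.castSucc k, by
            rw [hA'def, Fin.snoc_castSucc, hBdef, Function.update_of_ne hkj]; exact hk⟩
    have hbS : ((edgeBdry Γ S).ncard : ℝ) ≤ 2 * D := by
      have hsub : edgeBdry Γ S ⊆ edgeBdry Γ (g • A i) ∪ edgeBdry Γ (A j) :=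
        edgeBdry_inter_subset Γ _ _
      have h1 : (edgeBdry Γ S).ncard ≤ (edgeBdry Γ (g • A i)).ncard + (edgeBdry Γ (A j)).ncard :=
        le_trans (Set.ncard_le_ncard hsub (Set.toFinite _)) (Set.ncard_union_le _ _)
      rw [ncard_edgeBdry_smul Γ hact g (A i)] at h1
      have h2 : (edgeBdry Γ S).ncard ≤ D + D := le_trans h1 (add_le_add (hDle i) (hDle j))
      calc ((edgeBdry Γ S).ncard : ℝ) ≤ ((D + D : ℕ) : ℝ) := by exact_mod_cast h2
        _ = 2 * D := by push_cast; ring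
    have hbT : ((edgeBdry Γ (A j \ g • A i)).ncard : ℝ) ≤ 2 * D := by
      have hsub : edgeBdry Γ (A j \ g • A i) ⊆ edgeBdry Γ (A j) ∪ edgeBdry Γ (g • A i) :=
        edgeBdry_diff_subset Γ _ _
      have h1 : (edgeBdry Γ (A j \ g • A i)).ncard
          ≤ (edgeBdry Γ (A j)).ncard + (edgeBdry Γ (g • A i)).ncard :=
        le_trans (Set.ncard_le_ncard hsub (Set.toFinite _)) (Set.ncard_union_le _ _)
      rw [ncard_edgeBdry_smul Γ hact g (A i)] at h1
      have h2 : (edgeBdry Γ (A j \ g • A i)).ncard ≤ D + D :=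
        le_trans h1 (add_le_add (hDle j) (hDle i))
      calc ((edgeBdry Γ (A j \ g • A i)).ncard : ℝ) ≤ ((D + D : ℕ) : ℝ) := by exact_mod_cast h2
        _ = 2 * D := by push_cast; ring
    have hrlt : ∀ x, ((edgeBdry Γ (A' x)).ncard : ℝ) / ((A' x).ncard : ℝ) < H := by
      intro x
      rcases Fin.eq_castSucc_or_eq_last x with ⟨k, rfl⟩ | rfl
      · by_cases hkj : k = j
        · subst hkj
          rw [hA'def, Fin.snoc_castSucc, hBdef, Function.update_self]
          have hpos : (0 : ℝ) < ((A k \ g • A i).ncard : ℝ) := lt_of_le_of_lt hr0 hT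
          rw [div_lt_iff₀ hpos]
          nlinarith [hbT, hrH, hT, hHpos]
        · rw [hA'def, Fin.snoc_castSucc, hBdef, Function.update_of_ne hkj]
          exact lt_of_le_of_lt (hratio_le k) hhH
      · rw [hA'def, Fin.snoc_last]
        have hpos : (0 : ℝ) < (S.ncard : ℝ) := lt_of_le_of_lt hr0 hS
        rw [div_lt_iff₀ hpos]
        nlinarith [hbS, hrH, hS, hHpos]
    have hbdd : BddBelow {x : ℝ | ∃ B' : Fin (n + 1) → Set V,
        IsNPartition (n + 1) B' ∧ x = edgeRatioMax Γ B'} := by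
      refine ⟨0, ?_⟩
      rintro x ⟨B', hB', rfl⟩
      exact Real.iSup_nonneg fun i => div_nonneg (by positivity) (by positivity)
    have hHle : H ≤ edgeRatioMax Γ A' := csInf_le hbdd ⟨A', hpart, rfl⟩
    obtain ⟨x0, hx0⟩ := Finite.exists_max
      (fun x : Fin (n + 1) => ((edgeBdry Γ (A' x)).ncard : ℝ) / ((A' x).ncard : ℝ))
    have hle : edgeRatioMax Γ A' ≤ ((edgeBdry Γ (A' x0)).ncard : ℝ) / ((A' x0).ncard : ℝ) :=
      ciSup_le hx0
    exact absurd (lt_of_le_of_lt (hHle.trans hle) (hrlt x0)) (lt_irrefl H)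
  -- matching predicate
  set P : G → Fin n → Fin n → Prop := fun g i j => r < ((g • A i ∩ A j).ncard : ℝ) with hPdef
  have KLfwd : ∀ (g : G) (i j : Fin n), P g i j → ((A j \ g • A i).ncard : ℝ) ≤ r := by
    intro g i j hP
    rcases KL1 g i j with h1 | h2
    · exact absurd h1 (not_le.mpr hP)
    · exact h2
  have KLrev : ∀ (g : G) (i j : Fin n), P g i j → ((g • A i \ A j).ncard : ℝ) ≤ r := by
    intro g i j hP
    rcases KL1 g⁻¹ j i with h1 | h2
    · exfalso
      have hcardeq : (g⁻¹ • A j ∩ A i).ncard = (g • A i ∩ A j).ncard := by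
        rw [← Set.ncard_smul_set g (g⁻¹ • A j ∩ A i), Set.smul_set_inter, smul_inv_smul,
          Set.inter_comm]
      rw [hcardeq] at h1
      exact absurd h1 (not_le.mpr hP)
    · have hseteq : (g • (A i \ g⁻¹ • A j) : Set V) = g • A i \ A j := by
        rw [Set.smul_set_sdiff, smul_inv_smul]
      have hcard2 : (g • A i \ A j).ncard = (A i \ g⁻¹ • A j).ncard := by
        rw [← hseteq, Set.ncard_smul_set]
      rw [hcard2]
      exact h2
  have KL3 : ∀ (g : G) (i j : Fin n), P g i j →
      ((symmDiff (g • A i) (A j)).ncard : ℝ) ≤ 2 * r := by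
    intro g i j hP
    have hsd : symmDiff (g • A i) (A j) = (g • A i \ A j) ∪ (A j \ g • A i) :=
      Set.symmDiff_def _ _
    rw [hsd]
    have h1 : ((g • A i \ A j) ∪ (A j \ g • A i)).ncard
        ≤ (g • A i \ A j).ncard + (A j \ g • A i).ncard := Set.ncard_union_le _ _
    have h2 := KLrev g i j hP
    have h3 := KLfwd g i j hP
    have h1' : (((g • A i \ A j) ∪ (A j \ g • A i)).ncard : ℝ)
        ≤ ((g • A i \ A j).ncard : ℝ) + ((A j \ g • A i).ncard : ℝ) := by exact_mod_cast h1
    linarith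
  have KL5 : ∀ (g : G) (i j : Fin n), P g i j →
      ((A i).ncard : ℝ) - r ≤ ((g • A i ∩ A j).ncard : ℝ) := by
    intro g i j hP
    have h1 : (g • A i : Set V).ncard ≤ (g • A i ∩ A j).ncard + (g • A i \ A j).ncard := by
      calc (g • A i : Set V).ncard = ((g • A i ∩ A j) ∪ (g • A i \ A j)).ncard := by
            rw [Set.inter_union_diff]
        _ ≤ _ := Set.ncard_union_le _ _
    rw [Set.ncard_smul_set] at h1
    have h2 := KLrev g i j hP
    have h1' : ((A i).ncard : ℝ) ≤ ((g • A i ∩ A j).ncard : ℝ) + ((g • A i \ A j).ncard : ℝ) := by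
      exact_mod_cast h1
    linarith
  have KL5' : ∀ (g : G) (i j : Fin n), P g i j →
      ((A i).ncard : ℝ) - r ≤ ((A j).ncard : ℝ) := by
    intro g i j hP
    have h1 : (g • A i ∩ A j).ncard ≤ (A j).ncard :=
      Set.ncard_le_ncard Set.inter_subset_right (Set.toFinite _)
    have h1' : ((g • A i ∩ A j).ncard : ℝ) ≤ ((A j).ncard : ℝ) := by exact_mod_cast h1
    linarith [KL5 g i j hP]
  have KL2 : ∀ (g : G) (i j j' : Fin n), P g i j → P g i j' → j = j' := by
    intro g i j j' hPj hPj'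
    by_contra hne'
    have hsub : g • A i ∩ A j' ⊆ g • A i \ A j := by
      intro x hx
      exact ⟨hx.1, fun hxj => Set.disjoint_left.mp (hdisj j' j fun e => hne' e.symm) hx.2 hxj⟩
    have h1 : ((g • A i ∩ A j').ncard : ℝ) ≤ ((g • A i \ A j).ncard : ℝ) := by
      exact_mod_cast Set.ncard_le_ncard hsub (Set.toFinite _)
    have h2 := KLrev g i j hPj
    have h3 : r < ((g • A i ∩ A j').ncard : ℝ) := hPj'
    linarith
  have KL4 : ∀ (g : G) (i : Fin n), (n : ℝ) * r < ((A i).ncard : ℝ) → ∃ j, P g i j := by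
    intro g i hbig
    by_contra hno
    push_neg at hno
    have hno' : ∀ j, ((g • A i ∩ A j).ncard : ℝ) ≤ r := by
      intro j
      have := hno j
      rw [hPdef] at this
      exact not_lt.mp this
    have hcup : (g • A i : Set V) = ⋃ j, g • A i ∩ A j := by
      rw [← Set.inter_iUnion, hcover, Set.inter_univ]
    have h1 := ncard_iUnion_fin_le (fun j : Fin n => g • A i ∩ A j)
    rw [← hcup] at h1
    have h2 : ((g • A i : Set V).ncard : ℝ) ≤ (n : ℝ) * r := by
      calc ((g • A i : Set V).ncard : ℝ) ≤ ((∑ j, (g • A i ∩ A j).ncard : ℕ) : ℝ) := by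
            exact_mod_cast h1
        _ = ∑ j, ((g • A i ∩ A j).ncard : ℝ) := by push_cast; rfl
        _ ≤ ∑ _j : Fin n, r := Finset.sum_le_sum fun j _ => hno' j
        _ = (n : ℝ) * r := by simp [Finset.sum_const, Finset.card_univ]
    rw [Set.ncard_smul_set] at h2
    linarith
  have KL6 : ∀ (g g' : G) (i j m : Fin n), P g i j → P g' j m →
      3 * r < ((A i).ncard : ℝ) → P (g' * g) i m := by
    intro g g' i j m hPj hPm hbig
    have hXY : ((g' * g) • A i ∩ g' • A j : Set V) = g' • (g • A i ∩ A j) := by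
      rw [Set.smul_set_inter, mul_smul]
    have h1 : ((g' * g) • A i ∩ g' • A j : Set V).ncard = (g • A i ∩ A j).ncard := by
      rw [hXY, Set.ncard_smul_set]
    have h2 : ((g' • A j \ A m : Set V).ncard : ℝ) ≤ r := KLrev g' j m hPm
    have hsub : ((g' * g) • A i ∩ g' • A j : Set V)
        ⊆ ((g' * g) • A i ∩ A m) ∪ (g' • A j \ A m) := by
      intro x hx
      by_cases hm : x ∈ A m
      · exact Or.inl ⟨hx.1, hm⟩
      · exact Or.inr ⟨hx.2, hm⟩
    have h3 : ((g' * g) • A i ∩ g' • A j : Set V).ncard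
        ≤ ((g' * g) • A i ∩ A m).ncard + (g' • A j \ A m).ncard :=
      le_trans (Set.ncard_le_ncard hsub (Set.toFinite _)) (Set.ncard_union_le _ _)
    have h4 := KL5 g i j hPj
    have h1' : (((g' * g) • A i ∩ g' • A j : Set V).ncard : ℝ)
        = ((g • A i ∩ A j).ncard : ℝ) := by exact_mod_cast h1
    have h3' : (((g' * g) • A i ∩ g' • A j : Set V).ncard : ℝ)
        ≤ (((g' * g) • A i ∩ A m).ncard : ℝ) + ((g' • A j \ A m).ncard : ℝ) := by
      exact_mod_cast h3
    rw [hPdef]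
    linarith
  -- threshold estimates
  have hrM : ((n : ℝ) + 1) * r < M := by
    have h1 : (((n : ℝ) + 1) * r) * H = 2 * ((n : ℝ) + 1) * D := by
      rw [hr]; field_simp
    have h2 : 2 * ((n : ℝ) + 1) * (D : ℝ) ≤ 2 * ((n : ℝ) + 1) * (h * M) := by
      apply mul_le_mul_of_nonneg_left hDhM
      nlinarith [hn2]
    have h3 : (2 * ((n : ℝ) + 1) * h) * M < H * M :=
      mul_lt_mul_of_pos_right hgap hMpos
    nlinarith [hHpos]
  have hMr : r < M := by nlinarith [hrM, hr0, hn2]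
  have hP1 : ∀ k, r < ((A k).ncard : ℝ) → P 1 k k := by
    intro k hk
    rw [hPdef]
    show r < (((1 : G) • A k ∩ A k).ncard : ℝ)
    rw [one_smul, Set.inter_self]
    exact hk
  set L : Finset (Fin n) := Finset.univ.filter (fun k => ∃ g : G, P g i0 k) with hLdef
  have hmemL : ∀ k, k ∈ L ↔ ∃ g : G, P g i0 k := by
    intro k; rw [hLdef]; simp
  have hi0L : i0 ∈ L := (hmemL i0).mpr ⟨1, hP1 i0 hMr⟩
  have hLsize : ∀ k, k ∈ L → (n : ℝ) * r < ((A k).ncard : ℝ) ∧ 3 * r < ((A k).ncard : ℝ) := by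
    intro k hk
    obtain ⟨g0, hP0⟩ := (hmemL k).mp hk
    have hk5 := KL5' g0 i0 k hP0
    by_cases hn3 : 3 ≤ n
    · have hn3' : (3 : ℝ) ≤ (n : ℝ) := by exact_mod_cast hn3
      constructor
      · linarith [hrM]
      · nlinarith [hrM, hr0]
    · have hn2' : n = 2 := by omega
      subst hn2'
      have hc : A 1 = (A 0)ᶜ := by
        ext x
        simp only [Set.mem_compl_iff]
        constructor
        · intro hx hx0
          exact Set.disjoint_left.mp (hdisj 1 0 (by decide)) hx hx0
        · intro hx
          have hx2 : x ∈ ⋃ i, A i := by rw [hcover]; trivial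
          rw [Set.mem_iUnion] at hx2
          obtain ⟨kk, hkk⟩ := hx2
          fin_cases kk
          · exact absurd hkk hx
          · exact hkk
      have hD0 : (edgeBdry Γ (A 1)).ncard = (edgeBdry Γ (A 0)).ncard := by
        rw [hc, edgeBdry_compl]
      have hDn : D ≤ (edgeBdry Γ (A 0)).ncard := by
        rw [hD]
        apply Finset.sup_le
        intro x _
        fin_cases x
        · exact le_refl _
        · exact le_of_eq hD0
      have hb0 : (D : ℝ) ≤ h * ((A 0).ncard : ℝ) :=
        le_trans (by exact_mod_cast hDn) (hbdry_le 0)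
      have hb1 : (D : ℝ) ≤ h * ((A 1).ncard : ℝ) := by
        have hDn1 : D ≤ (edgeBdry Γ (A 1)).ncard := by rw [hD0]; exact hDn
        exact le_trans (by exact_mod_cast hDn1) (hbdry_le 1)
      have hbk : (D : ℝ) ≤ h * ((A k).ncard : ℝ) := by
        fin_cases k
        · exact hb0
        · exact hb1
      have h6 : 6 * h < H := by
        push_cast at hgap
        linarith
      have key : 3 * r < ((A k).ncard : ℝ) := by
        nlinarith [hbk, hAco k, hHpos, hrH]
      constructor
      · push_cast
        nlinarith [key, hr0]
      · exact key
  have hLM : 3 * r < M := by nlinarith [hrM, hr0, hn2]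
  have hLex : ∀ k, k ∈ L → ∀ g : G, ∃ j, P g k j ∧ j ∈ L := by
    intro k hk g
    obtain ⟨g0, hP0⟩ := (hmemL k).mp hk
    obtain ⟨j, hPj⟩ := KL4 g k (hLsize k hk).1
    exact ⟨j, hPj, (hmemL j).mpr ⟨g * g0, KL6 g0 g i0 k j hP0 hPj hLM⟩⟩
  have htot : ∀ (g : G) (k : Fin n), ∃ j, (k ∈ L → (P g k j ∧ j ∈ L)) := by
    intro g k
    by_cases hk : k ∈ L
    · obtain ⟨j, h1, h2⟩ := hLex k hk g
      exact ⟨j, fun _ => ⟨h1, h2⟩⟩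
    · exact ⟨k, fun hkL => absurd hkL hk⟩
  choose φ hφ using htot
  have hφuniq : ∀ (g : G) (k j : Fin n), k ∈ L → P g k j → φ g k = j :=
    fun g k j hk hPj => KL2 g k _ j (hφ g k hk).1 hPj
  have hcomp : ∀ (g g' : G) (k : Fin n), k ∈ L → φ (g' * g) k = φ g' (φ g k) := by
    intro g g' k hk
    have h1 := hφ g k hk
    have h2 := hφ g' (φ g k) h1.2
    exact hφuniq (g' * g) k _ hk (KL6 g g' k (φ g k) (φ g' (φ g k)) h1.1 h2.1 (hLsize k hk).2)
  have hone : ∀ k, k ∈ L → φ 1 k = k := by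
    intro k hk
    refine hφuniq 1 k k hk (hP1 k ?_)
    have := (hLsize k hk).2
    linarith [hr0]
  have hinv1 : ∀ (g : G) (k : Fin n), k ∈ L → φ g⁻¹ (φ g k) = k := by
    intro g k hk
    rw [← hcomp g g⁻¹ k hk, inv_mul_cancel, hone k hk]
  have hinv2 : ∀ (g : G) (k : Fin n), k ∈ L → φ g (φ g⁻¹ k) = k := by
    intro g k hk
    rw [← hcomp g⁻¹ g k hk, mul_inv_cancel, hone k hk]
  have hφmem : ∀ (g : G) (k : {x : Fin n // x ∈ L}), φ g k.1 ∈ L := fun g k => (hφ g k.1 k.2).2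
  set Φ' : G → Equiv.Perm {x : Fin n // x ∈ L} := fun g =>
    { toFun := fun k => ⟨φ g k.1, hφmem g k⟩
      invFun := fun k => ⟨φ g⁻¹ k.1, hφmem g⁻¹ k⟩
      left_inv := fun k => Subtype.ext (hinv1 g k.1 k.2)
      right_inv := fun k => Subtype.ext (hinv2 g k.1 k.2) } with hΦ'def
  set l : ℕ := L.card with hldef
  have hl1 : 1 ≤ l := Finset.card_pos.mpr ⟨i0, hi0L⟩
  have hln : l ≤ n := by
    calc l ≤ Finset.univ.card := Finset.card_le_univ L
      _ = n := by simp
  set eL : Fin l ≃o {x : Fin n // x ∈ L} := L.orderIsoOfFin hldef.symm with heLdef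
  set Φfun : G → Equiv.Perm (Fin l) :=
    fun g => (eL.toEquiv.trans (Φ' g)).trans eL.toEquiv.symm with hΦfundef
  have hΦfun_apply : ∀ (g : G) (i : Fin l), Φfun g i = eL.symm ⟨φ g (eL i).1, hφmem g (eL i)⟩ := by
    intro g i
    rw [hΦfundef, hΦ'def]
    rfl
  have hΦval : ∀ (g : G) (i : Fin l),
      ((eL (Φfun g i) : {x : Fin n // x ∈ L}) : Fin n) = φ g (eL i).1 := by
    intro g i
    rw [hΦfun_apply, OrderIso.apply_symm_apply]
  have hΦmul : ∀ a b : G, Φfun (a * b) = Φfun a * Φfun b := by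
    intro a b
    refine Equiv.ext fun i => ?_
    apply eL.injective
    refine Subtype.ext ?_
    rw [Equiv.Perm.mul_apply, hΦval, hΦval, hΦval]
    exact hcomp b a (eL i).1 (eL i).2
  set Φ : G →* Equiv.Perm (Fin l) := MonoidHom.mk' Φfun hΦmul with hΦdef
  -- the permutation τ
  have hnl : l + (n - l) = n := by omega
  have hcardc : Lᶜ.card = n - l := by
    rw [Finset.card_compl]
    simp [hldef]
  set e2 : Fin (n - l) ≃o {x : Fin n // x ∈ Lᶜ} := Lᶜ.orderIsoOfFin hcardc with he2def
  set e2' : {x : Fin n // x ∈ Lᶜ} ≃ {x : Fin n // ¬ x ∈ L} :=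
    Equiv.subtypeEquivRight (fun x => Finset.mem_compl) with he2'def
  set τ : Equiv.Perm (Fin n) :=
    (finCongr hnl.symm).trans ((finSumFinEquiv.symm).trans
      ((eL.toEquiv.sumCongr (e2.toEquiv.trans e2')).trans
        (Equiv.sumCompl (fun x => x ∈ L)))) with hτdef
  have hτ : ∀ i : Fin l, τ (Fin.castLE hln i) = ((eL i : {x : Fin n // x ∈ L}) : Fin n) := by
    intro i
    have hcast : (finCongr hnl.symm) (Fin.castLE hln i) = Fin.castAdd (n - l) i := by
      apply Fin.ext
      simp
    rw [hτdef]
    simp only [Equiv.trans_apply, hcast, finSumFinEquiv_symm_apply_castAdd,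
      Equiv.sumCongr_apply, Sum.map_inl, Equiv.sumCompl_apply_inl]
    rfl
  -- conclusion
  refine ⟨l, hl1, hln, τ, Φ, ?_⟩
  intro g i
  have hk := (eL i).2
  have hΦgi : ((eL (Φ g i) : {x : Fin n // x ∈ L}) : Fin n) = φ g (eL i).1 := by
    have : Φ g i = eL.symm ⟨φ g (eL i).1, hφmem g (eL i)⟩ := hΦfun_apply g i
    rw [this, OrderIso.apply_symm_apply]
  rw [hτ i, hτ (Φ g i), hΦgi, hiSupM]
  have hb := KL3 g (eL i).1 (φ g (eL i).1) (hφ g (eL i).1 hk).1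
  have hfinal : 2 * r ≤ 4 * h / H * M := by
    rw [hr]
    have h1 : (4 : ℝ) * D ≤ 4 * (h * M) := by linarith [hDhM]
    calc 2 * (2 * (D : ℝ) / H) = 4 * (D : ℝ) / H := by ring
      _ ≤ 4 * (h * M) / H := by
        apply div_le_div_of_nonneg_right h1 hHpos.le
      _ = 4 * h / H * M := by ring
  exact le_trans hb hfinal


end Multiway
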